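/- For every odd integer m ≥ 5, the generalized Grötzsch graph G_m is triangle-free, i.e., it contains no clique on 3 vertices. -/

import Mathlib

open SimpleGraph

/-- Vertex type for the graphs on `2m+1` vertices: `Sum.inl i` is the vertex `pᵢ`,
`Sum.inr (Sum.inl i)` is the vertex `qᵢ` (indices taken modulo `m`),
and `Sum.inr (Sum.inr ())` is the apex vertex `a`. -/
abbrev GVert (m : ℕ) := Sum (ZMod m) (Sum (ZMod m) Unit)

/-- The vertex `pᵢ`. -/
def pV {m : ℕ} (i : ZMod m) : GVert m := Sum.inl i

/-- The vertex `qᵢ`. -/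
def qV {m : ℕ} (i : ZMod m) : GVert m := Sum.inr (Sum.inl i)

/-- The apex vertex `a`. -/
def aV (m : ℕ) : GVert m := Sum.inr (Sum.inr ())

/-- The generalized Grötzsch graph `G_m` (intended for odd `m ≥ 5`): edges are
`a qᵢ` for all `i`, `pᵢ pᵢ₊₁` for all `i`, and `pᵢ q_{i + (2k-1)}` for all `i` and
`0 ≤ k ≤ (m-3)/2`, all indices taken modulo `m`. -/
def GenGrotzsch (m : ℕ) : SimpleGraph (GVert m) :=
  SimpleGraph.fromRel (fun u v =>
    (∃ i : ZMod m, u = aV m ∧ v = qV i) ∨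
    (∃ i : ZMod m, u = pV i ∧ v = pV (i + 1)) ∨
    (∃ (i : ZMod m) (k : ℕ), k ≤ (m - 3) / 2 ∧
      u = pV i ∧ v = qV (i + (2 * (k : ZMod m) - 1))))

/-- No two `q`-vertices are adjacent. -/
lemma not_adj_qq (m : ℕ) (i j : ZMod m) : ¬ (GenGrotzsch m).Adj (qV i) (qV j) := by
  simp [GenGrotzsch, qV, pV, aV]

/-- The apex is not adjacent to any `p`-vertex. -/
lemma not_adj_ap (m : ℕ) (i : ZMod m) : ¬ (GenGrotzsch m).Adj (aV m) (pV i) := by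
  simp [GenGrotzsch, qV, pV, aV]

/-- Adjacent `p`-vertices are consecutive. -/
lemma adj_pp (m : ℕ) (i j : ZMod m) (h : (GenGrotzsch m).Adj (pV i) (pV j)) :
    j = i + 1 ∨ i = j + 1 := by
  simp [GenGrotzsch, qV, pV, aV] at h
  exact h.2

/-- A `p`-vertex adjacent to a `q`-vertex differs from it by an admissible odd shift. -/
lemma adj_pq (m : ℕ) (i l : ZMod m) (h : (GenGrotzsch m).Adj (pV i) (qV l)) :
    ∃ k : ℕ, k ≤ (m - 3) / 2 ∧ l = i + (2 * (k : ZMod m) - 1) := by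
  simp [GenGrotzsch, qV, pV, aV] at h
  obtain ⟨k, hk, hl⟩ := h
  exact ⟨k, hk, hl⟩

/-- Parity argument: `2k` and `2k' + 1` are distinct modulo `m` when both are small. -/
lemma key (m : ℕ) (h5 : 5 ≤ m) {k k' : ℕ} (hk : k ≤ (m - 3) / 2) (hk' : k' ≤ (m - 3) / 2)
    (h : ((2 * k : ℕ) : ZMod m) = ((2 * k' + 1 : ℕ) : ZMod m)) : False := by
  haveI : NeZero m := ⟨by omega⟩
  have h1 : 2 * k < m := by omega
  have h2 : 2 * k' + 1 < m := by omega
  have := congrArg ZMod.val h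
  rw [ZMod.val_natCast_of_lt h1, ZMod.val_natCast_of_lt h2] at this
  omega

lemma oneNeZero (m : ℕ) (h5 : 5 ≤ m) : (1 : ZMod m) ≠ 0 := by
  haveI : NeZero m := ⟨by omega⟩
  intro h
  have := congrArg ZMod.val h
  rw [show ((1 : ZMod m)) = ((1 : ℕ) : ZMod m) by push_cast; ring,
    ZMod.val_natCast_of_lt (by omega), ZMod.val_zero] at this
  omega

lemma threeNeZero (m : ℕ) (h5 : 5 ≤ m) : (3 : ZMod m) ≠ 0 := by
  haveI : NeZero m := ⟨by omega⟩
  intro h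
  have := congrArg ZMod.val h
  rw [show ((3 : ZMod m)) = ((3 : ℕ) : ZMod m) by push_cast; ring,
    ZMod.val_natCast_of_lt (by omega), ZMod.val_zero] at this
  omega

/-- There is no triangle among three `p`-vertices. -/
lemma threeP (m : ℕ) (h5 : 5 ≤ m) (a b c : ZMod m)
    (h1 : b = a + 1 ∨ a = b + 1) (h2 : c = b + 1 ∨ b = c + 1)
    (h3 : a = c + 1 ∨ c = a + 1) : False := by
  have o1 := oneNeZero m h5
  have o3 := threeNeZero m h5
  rcases h1 with h1 | h1 <;> rcases h2 with h2 | h2 <;> rcases h3 with h3 | h3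
  · exact o3 (by linear_combination -h1 - h2 - h3)
  · exact o1 (by linear_combination -h1 - h2 + h3)
  · exact o1 (by linear_combination -h1 + h2 - h3)
  · exact o1 (by linear_combination h1 - h2 - h3)
  · exact o1 (by linear_combination h1 - h2 - h3)
  · exact o1 (by linear_combination -h1 + h2 - h3)
  · exact o1 (by linear_combination -h1 - h2 + h3)
  · exact o3 (by linear_combination -h1 - h2 - h3)

/-- There is no triangle with two `p`-vertices and one `q`-vertex. -/
lemma twoP (m : ℕ) (h5 : 5 ≤ m) (i j l : ZMod m) (hpp : j = i + 1 ∨ i = j + 1)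
    (k k' : ℕ) (hk : k ≤ (m - 3) / 2) (hk' : k' ≤ (m - 3) / 2)
    (h1 : l = i + (2 * (k : ZMod m) - 1)) (h2 : l = j + (2 * (k' : ZMod m) - 1)) : False := by
  rcases hpp with rfl | rfl
  · exact key m h5 hk hk' (by push_cast; linear_combination h2 - h1)
  · exact key m h5 hk' hk (by push_cast; linear_combination h1 - h2)

/-- No three pairwise adjacent vertices exist in `G_m`. -/
lemma no_triangle (m : ℕ) (h5 : 5 ≤ m) (x y z : GVert m)
    (Axy : (GenGrotzsch m).Adj x y) (Axz : (GenGrotzsch m).Adj x z)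
    (Ayz : (GenGrotzsch m).Adj y z) : False := by
  rcases x with i | i | _ <;> rcases y with j | j | _ <;> rcases z with l | l | _ <;>
    first
    | exact not_adj_qq m _ _ Axy
    | exact not_adj_qq m _ _ Axz
    | exact not_adj_qq m _ _ Ayz
    | exact not_adj_ap m _ Axy
    | exact not_adj_ap m _ Axz
    | exact not_adj_ap m _ Ayz
    | exact not_adj_ap m _ Axy.symm
    | exact not_adj_ap m _ Axz.symm
    | exact not_adj_ap m _ Ayz.symm
    | exact Axy.ne rfl
    | exact Axz.ne rfl
    | exact Ayz.ne rfl
    | exact threeP m h5 i j l (adj_pp m _ _ Axy) (adj_pp m _ _ Ayz) (adj_pp m _ _ Axz.symm)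
    | (obtain ⟨k, hk, e1⟩ := adj_pq m _ _ Axz
       obtain ⟨k', hk', e2⟩ := adj_pq m _ _ Ayz
       exact twoP m h5 i j l (adj_pp m _ _ Axy) k k' hk hk' e1 e2)
    | (obtain ⟨k, hk, e1⟩ := adj_pq m _ _ Axy
       obtain ⟨k', hk', e2⟩ := adj_pq m _ _ Ayz.symm
       exact twoP m h5 i l j (adj_pp m _ _ Axz) k k' hk hk' e1 e2)
    | (obtain ⟨k, hk, e1⟩ := adj_pq m _ _ Axy.symm
       obtain ⟨k', hk', e2⟩ := adj_pq m _ _ Axz.symm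
       exact twoP m h5 j l i (adj_pp m _ _ Ayz) k k' hk hk' e1 e2)

/-- For every odd integer `m ≥ 5`, the generalized Grötzsch graph `G_m` is
triangle-free. -/
theorem genGrotzsch_triangleFree (m : ℕ) (h5 : 5 ≤ m) (hodd : Odd m) :
    (GenGrotzsch m).CliqueFree 3 := by
  rintro s ⟨hc, hcard⟩
  rw [Finset.card_eq_three] at hcard
  obtain ⟨x, y, z, hxy, hxz, hyz, rfl⟩ := hcard
  have Axy := hc (by simp) (by simp) hxy
  have Axz := hc (by simp) (by simp) hxz
  have Ayz := hc (by simp) (by simp) hyz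
  exact no_triangle m h5 x y z Axy Axz Ayz
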